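/- arXiv:2508.15738 — 3 statements merged into one kernel-verified Lean document; each statement's English description precedes it below -/
import Mathlib

section
/- Let G be a group and G' ≤ G a finite-index subgroup. Then G' has unbranched blocks if and only if G has unbranched blocks. -/
universe u v

/-- A subgroup `B ≤ G` is virtually (nonabelian free) × ℤ: it has a finite-index
subgroup isomorphic to `F × ℤ` with `F` a nonabelian free group. -/
def IsVirtFNZ {G : Type u} [Group G] (B : Subgroup G) : Prop :=
  ∃ H : Subgroup G, H ≤ B ∧ H.relIndex B ≠ 0 ∧
    ∃ (ι : Type u) (x y : ι), x ≠ y ∧ Nonempty (↥H ≃* FreeGroup ι × Multiplicative ℤ)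

/-- A *block* of `G`: a subgroup virtually of the form (nonabelian free) × ℤ that is
maximal up to commensurability among such subgroups. -/
def IsGroupBlock {G : Type u} [Group G] (B : Subgroup G) : Prop :=
  IsVirtFNZ B ∧ ∀ B' : Subgroup G, IsVirtFNZ B' → B'.relIndex B ≠ 0 → B.relIndex B' ≠ 0

/-- A group is virtually cyclic (possibly finite) if it has a finite-index cyclic subgroup. -/
def IsVirtuallyCyclic (K : Type*) [Group K] : Prop :=
  ∃ H : Subgroup K, H.FiniteIndex ∧ IsCyclic H

/-- `G` has unbranched blocks: any three blocks that pairwise intersect in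
infinite-index subgroups have virtually cyclic triple intersection. -/
def HasUnbranchedBlocks (G : Type u) [Group G] : Prop :=
  ∀ B₁ B₂ B₃ : Subgroup G, IsGroupBlock B₁ → IsGroupBlock B₂ → IsGroupBlock B₃ →
    B₂.relIndex B₁ = 0 → B₃.relIndex B₁ = 0 → B₁.relIndex B₂ = 0 →
    B₃.relIndex B₂ = 0 → B₁.relIndex B₃ = 0 → B₂.relIndex B₃ = 0 →
    IsVirtuallyCyclic ↥(B₁ ⊓ B₂ ⊓ B₃)

section AuxiliaryLemmas

open Subgroup



lemma relindex_map_inj {K : Type*} {L : Type*} [Group K] [Group L] (f : K →* L)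
    (hf : Function.Injective f) (A B : Subgroup K) :
    (A.map f).relIndex (B.map f) = A.relIndex B := by
  conv_rhs => rw [← Subgroup.comap_map_eq_self_of_injective hf A]
  rw [Subgroup.relIndex_comap]


lemma isVirtuallyCyclic_of_injective {K L : Type*} [Group K] [Group L] (f : K →* L)
    (hf : Function.Injective f) (hr : f.range.index ≠ 0)
    (h : IsVirtuallyCyclic K) : IsVirtuallyCyclic L := by
  obtain ⟨H, hHfin, hHcyc⟩ := h
  refine ⟨H.map f, ⟨?_⟩, ?_⟩
  · rw [Subgroup.index_map_of_injective H hf]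
    exact mul_ne_zero hHfin.index_ne_zero hr
  · exact isCyclic_of_surjective (H.equivMapOfInjective f hf) (H.equivMapOfInjective f hf).surjective

lemma isVirtuallyCyclic_of_mulEquiv {K L : Type*} [Group K] [Group L] (e : K ≃* L)
    (h : IsVirtuallyCyclic K) : IsVirtuallyCyclic L := by
  refine isVirtuallyCyclic_of_injective e.toMonoidHom e.injective ?_ h
  rw [MonoidHom.range_eq_top_of_surjective _ e.surjective]
  simp [Subgroup.index_top]


noncomputable def permA : Equiv.Perm ℚ := Equiv.mulLeft₀ (2:ℚ) (by norm_num)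
def permB : Equiv.Perm ℚ := Equiv.addLeft (1:ℚ)

lemma permA_apply (q : ℚ) : permA q = 2 * q := rfl

lemma permB_apply (q : ℚ) : permB q = 1 + q := rfl

lemma permA_pow (k : ℕ) : ∀ q : ℚ, (permA ^ k) q = 2 ^ k * q := by
  induction k with
  | zero => intro q; simp
  | succ n ih =>
    intro q
    rw [pow_succ, Equiv.Perm.mul_apply, permA_apply, ih]
    ring

lemma permB_pow (m : ℕ) : ∀ q : ℚ, (permB ^ m) q = m + q := by
  induction m with
  | zero => intro q; simp
  | succ n ih =>
    intro q
    rw [pow_succ, Equiv.Perm.mul_apply, permB_apply, ih]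
    push_cast
    ring

lemma perm_noncomm {k m : ℕ} (hk : k ≠ 0) (hm : m ≠ 0) :
    permA ^ k * permB ^ m ≠ permB ^ m * permA ^ k := by
  intro h
  have h1 := congrArg (fun e : Equiv.Perm ℚ => e 1) h
  simp only [Equiv.Perm.mul_apply] at h1
  rw [permB_pow, permA_pow, permA_pow, permB_pow] at h1
  have hk2 : (2:ℚ) ^ 1 ≤ 2 ^ k := pow_le_pow_right₀ (by norm_num) (Nat.one_le_iff_ne_zero.mpr hk)
  have hm1 : (1:ℚ) ≤ m := by exact_mod_cast Nat.one_le_iff_ne_zero.mpr hm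
  rw [pow_one] at hk2
  nlinarith [h1, hk2, hm1]

lemma freeGroup_pow_pow_ne {ι : Type*} {x y : ι} (hxy : x ≠ y) {k m : ℕ} (hk : k ≠ 0)
    (hm : m ≠ 0) :
    (FreeGroup.of x) ^ k * (FreeGroup.of y) ^ m ≠ (FreeGroup.of y) ^ m * (FreeGroup.of x) ^ k := by
  classical
  intro h
  set φ := FreeGroup.lift (fun i : ι => if i = x then permA else if i = y then permB else 1) with hφ
  have hx : φ (FreeGroup.of x) = permA := by simp [hφ]
  have hy : φ (FreeGroup.of y) = permB := by simp [hφ, hxy.symm]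
  apply perm_noncomm hk hm
  have h2 := congrArg φ h
  simpa only [map_mul, map_pow, hx, hy] using h2

lemma freeGroup_commute_of_subsingleton {ι : Type*} [Subsingleton ι] (a b : FreeGroup ι) :
    Commute a b := by
  have base : ∀ (z : ι) (c : FreeGroup ι), Commute c (FreeGroup.of z) := by
    intro z c
    induction c using FreeGroup.induction_on with
    | C1 => exact Commute.one_left _
    | of w => exact (Subsingleton.elim z w) ▸ Commute.refl _
    | inv_of w h => exact h.inv_left
    | mul u v hu hv => exact hu.mul_left hv
  induction b using FreeGroup.induction_on with
  | C1 => exact Commute.one_right _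
  | of z => exact base z a
  | inv_of z h => exact (base z a).inv_right
  | mul u v hu hv => exact hu.mul_right hv

lemma exists_ne_generators {ι : Type u} {x y : ι} (hxy : x ≠ y) (F₁ : Subgroup (FreeGroup ι))
    (hF₁ : F₁.index ≠ 0) : ∃ s t : IsFreeGroup.Generators ↥F₁, s ≠ t := by
  by_contra hcon
  push_neg at hcon
  haveI hsub : Subsingleton (IsFreeGroup.Generators ↥F₁) := ⟨fun a b => hcon a b⟩
  have hcomm : ∀ a b : ↥F₁, a * b = b * a := by
    intro a b
    apply (IsFreeGroup.toFreeGroup (G := ↥F₁)).injective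
    rw [map_mul, map_mul]
    exact freeGroup_commute_of_subsingleton _ _
  obtain ⟨k, hk, -, hkmem⟩ := Subgroup.exists_pow_mem_of_index_ne_zero hF₁ (FreeGroup.of x)
  obtain ⟨m, hm, -, hmmem⟩ := Subgroup.exists_pow_mem_of_index_ne_zero hF₁ (FreeGroup.of y)
  have h1 := hcomm ⟨_, hkmem⟩ ⟨_, hmmem⟩
  have h2 : (FreeGroup.of x) ^ k * (FreeGroup.of y) ^ m
      = (FreeGroup.of y) ^ m * (FreeGroup.of x) ^ k := congrArg Subtype.val h1
  exact freeGroup_pow_pow_ne hxy hk.ne' hm.ne' h2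

lemma multiplicative_int_subgroup_equiv (Z₁ : Subgroup (Multiplicative ℤ)) (h : Z₁.index ≠ 0) :
    Nonempty (↥Z₁ ≃* Multiplicative ℤ) := by
  have hbot : Z₁ ≠ ⊥ := by
    rintro rfl
    rw [Subgroup.index_bot] at h
    exact h Nat.card_eq_zero_of_infinite
  obtain ⟨g, hg⟩ := IsCyclic.exists_generator (α := ↥Z₁)
  have hg1 : g ≠ 1 := by
    rintro rfl
    refine hbot (le_antisymm (fun z hz => ?_) bot_le)
    obtain ⟨n, hn⟩ := Subgroup.mem_zpowers_iff.mp (hg ⟨z, hz⟩)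
    have : z = 1 := by simpa using (congrArg Subtype.val hn).symm
    simp [this, Subgroup.mem_bot]
  have hgc : (g : Multiplicative ℤ) ≠ 1 := fun hc => hg1 (Subtype.ext (by simpa using hc))
  have htoadd : Multiplicative.toAdd (g : Multiplicative ℤ) ≠ 0 := by
    intro hc
    exact hgc (by simpa using congrArg Multiplicative.ofAdd hc)
  have hinj : Function.Injective (zpowersHom (↥Z₁) g) := by
    rw [injective_iff_map_eq_one]
    intro n hn
    have hc : (g : Multiplicative ℤ) ^ (Multiplicative.toAdd n) = 1 := by
      have := congrArg Subtype.val hn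
      simpa [zpowersHom_apply] using this
    have h0 : (Multiplicative.toAdd n) • Multiplicative.toAdd (g : Multiplicative ℤ) = 0 := by
      have := congrArg Multiplicative.toAdd hc
      simpa [toAdd_zpow] using this
    rw [smul_eq_mul, mul_eq_zero] at h0
    rcases h0 with h0 | h0
    · exact Multiplicative.toAdd.injective (by simpa using h0)
    · exact absurd h0 htoadd
  have hsurj : Function.Surjective (zpowersHom (↥Z₁) g) := by
    intro z
    obtain ⟨n, hn⟩ := Subgroup.mem_zpowers_iff.mp (hg z)
    exact ⟨Multiplicative.ofAdd n, by simpa [zpowersHom_apply] using hn⟩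
  exact ⟨(MulEquiv.ofBijective _ ⟨hinj, hsurj⟩).symm⟩



lemma relindex_ne_zero_of_index_ne_zero {G : Type*} [Group G] {H : Subgroup G}
    (h : H.index ≠ 0) (K : Subgroup G) : H.relIndex K ≠ 0 := by
  haveI : H.FiniteIndex := ⟨h⟩
  exact (Subgroup.instFiniteIndex_subgroupOf H K).index_ne_zero

lemma A_core {ι : Type u} {x y : ι} (hxy : x ≠ y)
    (K' : Subgroup (FreeGroup ι × Multiplicative ℤ)) (hK' : K'.index ≠ 0) :
    ∃ W : Subgroup (FreeGroup ι × Multiplicative ℤ), W ≤ K' ∧ W.index ≠ 0 ∧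
      ∃ (σ : Type u) (s t : σ), s ≠ t ∧ Nonempty (↥W ≃* FreeGroup σ × Multiplicative ℤ) := by
  set F₁ : Subgroup (FreeGroup ι) := K'.comap (MonoidHom.inl (FreeGroup ι) (Multiplicative ℤ))
    with hF₁def
  set Z₁ : Subgroup (Multiplicative ℤ) := K'.comap (MonoidHom.inr (FreeGroup ι) (Multiplicative ℤ))
    with hZ₁def
  have hF₁ : F₁.index ≠ 0 := by
    rw [hF₁def, Subgroup.index_comap]
    exact relindex_ne_zero_of_index_ne_zero hK' _
  have hZ₁ : Z₁.index ≠ 0 := by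
    rw [hZ₁def, Subgroup.index_comap]
    exact relindex_ne_zero_of_index_ne_zero hK' _
  refine ⟨F₁.prod Z₁, ?_, ?_, ?_⟩
  · rintro ⟨a, b⟩ hab
    rw [Subgroup.mem_prod] at hab
    have h1 : (a, (1 : Multiplicative ℤ)) ∈ K' := hab.1
    have h2 : ((1 : FreeGroup ι), b) ∈ K' := hab.2
    have : ((a, (1 : Multiplicative ℤ)) * ((1 : FreeGroup ι), b)) ∈ K' := mul_mem h1 h2
    simpa using this
  · rw [Subgroup.index_prod]
    exact mul_ne_zero hF₁ hZ₁
  · obtain ⟨s, t, hst⟩ := exists_ne_generators hxy F₁ hF₁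
    obtain ⟨eZ⟩ := multiplicative_int_subgroup_equiv Z₁ hZ₁
    exact ⟨IsFreeGroup.Generators ↥F₁, s, t, hst,
      ⟨(Subgroup.prodEquiv F₁ Z₁).trans
        (MulEquiv.prodCongr (IsFreeGroup.toFreeGroup (G := ↥F₁)) eZ)⟩⟩

lemma isVirtFNZ_of_relindex_ne_zero {G : Type u} [Group G] {B C : Subgroup G} (hCB : C ≤ B)
    (hr : C.relIndex B ≠ 0) (h : IsVirtFNZ B) : IsVirtFNZ C := by
  obtain ⟨H, hHB, hHrel, ι, x, y, hxy, ⟨e⟩⟩ := h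
  set C₀ : Subgroup ↥H := C.subgroupOf H with hC₀def
  have hC₀ : C₀.index ≠ 0 := by
    intro hc
    exact hr (Subgroup.relIndex_eq_zero_of_le_right hHB hc)
  set K' : Subgroup (FreeGroup ι × Multiplicative ℤ) := C₀.map e.toMonoidHom with hK'def
  have hK' : K'.index ≠ 0 := by
    rw [hK'def, Subgroup.index_map_of_injective _ e.injective,
      MonoidHom.range_eq_top_of_surjective _ e.surjective, Subgroup.index_top, mul_one]
    exact hC₀
  obtain ⟨W, hWK', hWidx, σ, s, t, hst, ⟨ψ⟩⟩ := A_core hxy K' hK'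
  set W₀ : Subgroup ↥H := W.comap e.toMonoidHom with hW₀def
  have hW₀C₀ : W₀ ≤ C₀ := by
    have h := Subgroup.comap_mono (f := e.toMonoidHom) hWK'
    rwa [Subgroup.comap_map_eq_self_of_injective e.injective] at h
  have hmapW₀ : W₀.map e.toMonoidHom = W :=
    Subgroup.map_comap_eq_self_of_surjective e.surjective W
  refine ⟨W₀.map H.subtype, ?_, ?_, σ, s, t, hst, ?_⟩
  · calc W₀.map H.subtype ≤ C₀.map H.subtype := Subgroup.map_mono hW₀C₀
    _ = C ⊓ H := Subgroup.subgroupOf_map_subtype C H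
    _ ≤ C := inf_le_left
  · -- relindex (W₀.map subtype) C ≠ 0 via chain ≤ C ⊓ H ≤ C
    have hle1 : W₀.map H.subtype ≤ C ⊓ H := by
      calc W₀.map H.subtype ≤ C₀.map H.subtype := Subgroup.map_mono hW₀C₀
      _ = C ⊓ H := Subgroup.subgroupOf_map_subtype C H
    have h1 : (W₀.map H.subtype).relIndex (C ⊓ H) ≠ 0 := by
      have e1 : (W₀.map H.subtype).relIndex (C₀.map H.subtype) = W₀.relIndex C₀ :=
        relindex_map_inj H.subtype H.subtype_injective W₀ C₀
      rw [Subgroup.subgroupOf_map_subtype C H] at e1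
      rw [e1]
      have e2 : W₀.relIndex C₀ = W.relIndex K' := by
        rw [← relindex_map_inj e.toMonoidHom e.injective W₀ C₀, hmapW₀]
      rw [e2]
      intro hc
      apply hWidx
      rw [← Subgroup.relIndex_mul_index hWK', hc, zero_mul]
    have h2 : (C ⊓ H).relIndex C ≠ 0 := by
      rw [Subgroup.inf_relIndex_left]
      intro hc
      exact hHrel (Subgroup.relIndex_eq_zero_of_le_right hCB hc)
    intro hc
    rw [← Subgroup.relIndex_mul_relIndex (H := _) (K := _) (L := C) hle1 inf_le_left] at hc
    exact (mul_ne_zero h1 h2) hc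
  · refine ⟨((Subgroup.equivMapOfInjective W₀ H.subtype H.subtype_injective).symm.trans
      ((Subgroup.equivMapOfInjective W₀ e.toMonoidHom e.injective).trans
        ((MulEquiv.subgroupCongr hmapW₀).trans ψ)))⟩


section Infra

lemma inf_helper {G : Type*} [Group G] {M G' : Subgroup G} (X : Subgroup G) (hM : M ≤ G') :
    M ⊓ (X ⊓ G') = M ⊓ X := by
  rw [inf_comm X G', ← inf_assoc, inf_eq_left.mpr hM]

lemma relindex_inf_right_eq {G : Type*} [Group G] {M G' : Subgroup G} (X : Subgroup G)
    (hM : M ≤ G') : (X ⊓ G').relIndex M = X.relIndex M := by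
  rw [← Subgroup.inf_relIndex_right (X ⊓ G') M, ← Subgroup.inf_relIndex_right X M]
  congr 1
  rw [inf_assoc, inf_comm G' M, inf_eq_left.mpr hM]

lemma relindex_ne_zero_of_inf {G : Type*} [Group G] {M X G' : Subgroup G} (hM : M ≤ G')
    (h1 : M.relIndex (X ⊓ G') ≠ 0) (h2 : G'.relIndex X ≠ 0) : M.relIndex X ≠ 0 := by
  have hc := Subgroup.relIndex_mul_relIndex (H := M ⊓ (X ⊓ G')) (K := X ⊓ G') (L := X) inf_le_right inf_le_left
  rw [Subgroup.inf_relIndex_right] at hc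
  rw [inf_helper X hM, Subgroup.inf_relIndex_right] at hc
  rw [Subgroup.inf_relIndex_left] at hc
  exact hc ▸ mul_ne_zero h1 h2

end Infra
section VirtFNZTransport

lemma isVirtFNZ_map {K L : Type u} [Group K] [Group L] (f : K →* L) (hf : Function.Injective f)
    {B : Subgroup K} (h : IsVirtFNZ B) : IsVirtFNZ (B.map f) := by
  obtain ⟨H, hHB, hrel, ι, x, y, hxy, ⟨e⟩⟩ := h
  exact ⟨H.map f, Subgroup.map_mono hHB, by rwa [relindex_map_inj f hf], ι, x, y, hxy,
    ⟨(Subgroup.equivMapOfInjective H f hf).symm.trans e⟩⟩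

lemma isVirtFNZ_of_map {K L : Type u} [Group K] [Group L] (f : K →* L) (hf : Function.Injective f)
    {B : Subgroup K} (h : IsVirtFNZ (B.map f)) : IsVirtFNZ B := by
  obtain ⟨H, hHB, hrel, ι, x, y, hxy, ⟨e⟩⟩ := h
  have hHrange : H ≤ f.range := hHB.trans (Subgroup.map_le_range f B)
  have hmap : (H.comap f).map f = H := Subgroup.map_comap_eq_self hHrange
  refine ⟨H.comap f, ?_, ?_, ι, x, y, hxy,
    ⟨(Subgroup.equivMapOfInjective (H.comap f) f hf).trans
      ((MulEquiv.subgroupCongr hmap).trans e)⟩⟩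
  · have := Subgroup.comap_mono (f := f) hHB
    rwa [Subgroup.comap_map_eq_self_of_injective hf] at this
  · rw [← relindex_map_inj f hf, hmap]
    exact hrel

end VirtFNZTransport

section Blocks

variable {G : Type u} [Group G] {G' : Subgroup G} (hidx : G'.index ≠ 0)

lemma block_up (hG' : ∀ X : Subgroup G, G'.relIndex X ≠ 0) {B' : Subgroup ↥G'}
    (hB' : IsGroupBlock B') : IsGroupBlock (B'.map G'.subtype) := by
  set f := G'.subtype with hf
  have hinj := G'.subtype_injective
  set M := B'.map f with hM
  have hMG' : M ≤ G' := Subgroup.map_subtype_le B'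
  refine ⟨isVirtFNZ_map f hinj hB'.1, ?_⟩
  intro X hX hXrel
  set Y := X.subgroupOf G' with hY
  have hYmap : Y.map f = X ⊓ G' := Subgroup.subgroupOf_map_subtype X G'
  have hXG' : (X ⊓ G').relIndex X ≠ 0 := by
    rw [Subgroup.inf_relIndex_left]
    exact hG' X
  have hYvirt : IsVirtFNZ Y := by
    apply isVirtFNZ_of_map f hinj
    rw [hYmap]
    exact isVirtFNZ_of_relindex_ne_zero inf_le_left hXG' hX
  have hYrel : Y.relIndex B' ≠ 0 := by
    rw [← relindex_map_inj f hinj Y B', hYmap, ← hM, relindex_inf_right_eq X hMG']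
    exact hXrel
  have hkey := hB'.2 Y hYvirt hYrel
  -- transport : M.relIndex (X ⊓ G') ≠ 0
  rw [← relindex_map_inj f hinj B' Y, hYmap, ← hM] at hkey
  exact relindex_ne_zero_of_inf hMG' hkey (hG' X)

lemma block_down (hG' : ∀ X : Subgroup G, G'.relIndex X ≠ 0) {B : Subgroup G}
    (hB : IsGroupBlock B) : IsGroupBlock (B.subgroupOf G') := by
  set f := G'.subtype with hf
  have hinj := G'.subtype_injective
  set D := B.subgroupOf G' with hD
  have hDmap : D.map f = B ⊓ G' := Subgroup.subgroupOf_map_subtype B G'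
  have hBG' : (B ⊓ G').relIndex B ≠ 0 := by
    rw [Subgroup.inf_relIndex_left]
    exact hG' B
  refine ⟨?_, ?_⟩
  · apply isVirtFNZ_of_map f hinj
    rw [hDmap]
    exact isVirtFNZ_of_relindex_ne_zero inf_le_left hBG' hB.1
  intro Y hY hYD
  set X := Y.map f with hX
  have hXG' : X ≤ G' := Subgroup.map_subtype_le Y
  have hXvirt : IsVirtFNZ X := isVirtFNZ_map f hinj hY
  have hXB : X.relIndex B ≠ 0 := by
    apply relindex_ne_zero_of_inf hXG' ?_ (hG' B)
    rw [← hDmap, relindex_map_inj f hinj]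
    exact hYD
  have hkey := hB.2 X hXvirt hXB
  rw [← relindex_map_inj f hinj D Y, hDmap, relindex_inf_right_eq B hXG']
  exact hkey

lemma relindex_subgroupOf_zero (hG' : ∀ X : Subgroup G, G'.relIndex X ≠ 0)
    {B₂ B₁ : Subgroup G} (hz : B₂.relIndex B₁ = 0) :
    (B₂.subgroupOf G').relIndex (B₁.subgroupOf G') = 0 := by
  by_contra h
  rw [← relindex_map_inj G'.subtype G'.subtype_injective, Subgroup.subgroupOf_map_subtype,
    Subgroup.subgroupOf_map_subtype] at h
  have hc := Subgroup.relIndex_mul_relIndex (H := (B₂ ⊓ G') ⊓ (B₁ ⊓ G')) (K := B₁ ⊓ G') (L := B₁)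
    inf_le_right inf_le_left
  rw [Subgroup.inf_relIndex_right] at hc
  have h2 : (B₁ ⊓ G').relIndex B₁ ≠ 0 := by
    rw [Subgroup.inf_relIndex_left]; exact hG' B₁
  have h3 : ((B₂ ⊓ G') ⊓ (B₁ ⊓ G')).relIndex B₁ ≠ 0 := hc ▸ mul_ne_zero h h2
  exact h3 (Subgroup.relIndex_eq_zero_of_le_left (inf_le_left.trans inf_le_left) hz)

end Blocks


end AuxiliaryLemmas

/-- For a finite-index subgroup `G' ≤ G`, `G'` has unbranched blocks
if and only if `G` does. -/
theorem finiteIndex_hasUnbranchedBlocks_iff {G : Type u} [Group G]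
    (G' : Subgroup G) (hfin : G'.FiniteIndex) :
    HasUnbranchedBlocks ↥G' ↔ HasUnbranchedBlocks G := by
  have hG' : ∀ X : Subgroup G, G'.relIndex X ≠ 0 :=
    relindex_ne_zero_of_index_ne_zero hfin.index_ne_zero
  set f := G'.subtype with hf
  have hinj := G'.subtype_injective
  constructor
  · -- G' has unbranched blocks → G does
    intro hub B₁ B₂ B₃ h1 h2 h3 r21 r31 r12 r32 r13 r23
    have hvc := hub (B₁.subgroupOf G') (B₂.subgroupOf G') (B₃.subgroupOf G')
      (block_down hG' h1) (block_down hG' h2) (block_down hG' h3)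
      (relindex_subgroupOf_zero hG' r21) (relindex_subgroupOf_zero hG' r31)
      (relindex_subgroupOf_zero hG' r12) (relindex_subgroupOf_zero hG' r32)
      (relindex_subgroupOf_zero hG' r13) (relindex_subgroupOf_zero hG' r23)
    set T := B₁ ⊓ B₂ ⊓ B₃ with hT
    have hTsub : B₁.subgroupOf G' ⊓ B₂.subgroupOf G' ⊓ B₃.subgroupOf G' = T.subgroupOf G' := by
      simp only [hT, Subgroup.subgroupOf, Subgroup.comap_inf]
    rw [hTsub] at hvc
    have hvc2 : IsVirtuallyCyclic ↥(T ⊓ G' : Subgroup G) := by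
      refine isVirtuallyCyclic_of_mulEquiv ?_ hvc
      exact (Subgroup.equivMapOfInjective (T.subgroupOf G') f hinj).trans
        (MulEquiv.subgroupCongr (Subgroup.subgroupOf_map_subtype T G'))
    refine isVirtuallyCyclic_of_injective (Subgroup.inclusion (inf_le_left : T ⊓ G' ≤ T))
      (Subgroup.inclusion_injective _) ?_ hvc2
    rw [Subgroup.inclusion_range]
    have : ((T ⊓ G').subgroupOf T).index = (T ⊓ G').relIndex T := rfl
    rw [this, Subgroup.inf_relIndex_left]
    exact hG' T
  · -- G has unbranched blocks → G' does
    intro hub B₁ B₂ B₃ h1 h2 h3 r21 r31 r12 r32 r13 r23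
    have hrel : ∀ A B : Subgroup ↥G', (A.map f).relIndex (B.map f) = A.relIndex B :=
      fun A B => relindex_map_inj f hinj A B
    have hvc := hub (B₁.map f) (B₂.map f) (B₃.map f)
      (block_up hG' h1) (block_up hG' h2) (block_up hG' h3)
      (by rw [hrel]; exact r21) (by rw [hrel]; exact r31) (by rw [hrel]; exact r12)
      (by rw [hrel]; exact r32) (by rw [hrel]; exact r13) (by rw [hrel]; exact r23)
    have hinf : B₁.map f ⊓ B₂.map f ⊓ B₃.map f = (B₁ ⊓ B₂ ⊓ B₃).map f := by
      rw [Subgroup.map_inf _ _ f hinj, Subgroup.map_inf _ _ f hinj]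
    rw [hinf] at hvc
    exact isVirtuallyCyclic_of_mulEquiv
      (Subgroup.equivMapOfInjective (B₁ ⊓ B₂ ⊓ B₃) f hinj).symm hvc
end

section
/- Let G' ≤ G be a finite-index subgroup and B a block in G. Then B' = G' ∩ B is a block in G', and B is a block in G if and only if B ∩ G' is a block in G'. Moreover, B ∩ G' is commensurable with B, i.e., has finite index in B. -/
universe u v

namespace BlockAux

open Subgroup

/-! ### Free group word facts -/

theorem reduce_rep {α : Type*} [DecidableEq α] {x y : α} (h : x ≠ y) (p q : ℕ) :
    FreeGroup.reduce (List.replicate p (x, true) ++ List.replicate q (y, true)) =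
      List.replicate p (x, true) ++ List.replicate q (y, true) := by
  induction p with
  | zero => simp
  | succ p ih =>
    rw [List.replicate_succ, List.cons_append, FreeGroup.reduce.cons, ih]
    cases p with
    | zero =>
      cases q with
      | zero => simp
      | succ q => simp [List.replicate_succ, h]
    | succ p => simp [List.replicate_succ]

theorem of_pow_eq_mk {α : Type*} [DecidableEq α] (a : α) (n : ℕ) :
    FreeGroup.of a ^ n = FreeGroup.mk (List.replicate n (a, true)) := by
  rw [← FreeGroup.toWord_of_pow a n, FreeGroup.mk_toWord]

theorem ncomm_nat {α : Type*} {x y : α} (h : x ≠ y) {p q : ℕ} (hp : p ≠ 0) (hq : q ≠ 0) :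
    FreeGroup.of x ^ p * FreeGroup.of y ^ q ≠ FreeGroup.of y ^ q * FreeGroup.of x ^ p := by
  classical
  rw [of_pow_eq_mk, of_pow_eq_mk, FreeGroup.mul_mk, FreeGroup.mul_mk]
  intro hEq
  have h2 := FreeGroup.reduce.sound hEq
  rw [reduce_rep h, reduce_rep (Ne.symm h)] at h2
  obtain ⟨p, rfl⟩ := Nat.exists_eq_succ_of_ne_zero hp
  obtain ⟨q, rfl⟩ := Nat.exists_eq_succ_of_ne_zero hq
  have h3 : some ((x, true) : α × Bool) = some ((y, true) : α × Bool) := by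
    calc some ((x, true) : α × Bool)
        = (List.replicate (p+1) (x, true) ++ List.replicate (q+1) (y, true)).head? := by
          simp [List.replicate_succ]
      _ = (List.replicate (q+1) (y, true) ++ List.replicate (p+1) (x, true)).head? := by rw [h2]
      _ = some ((y, true) : α × Bool) := by simp [List.replicate_succ]
  simp only [Option.some.injEq, Prod.mk.injEq] at h3
  exact h h3.1

theorem ncomm_zpow {α : Type*} {x y : α} (h : x ≠ y) {p q : ℤ} (hp : p ≠ 0) (hq : q ≠ 0) :
    ¬ Commute (FreeGroup.of x ^ p) (FreeGroup.of y ^ q) := by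
  intro hc
  have hx : Commute (FreeGroup.of x ^ (p.natAbs : ℤ)) (FreeGroup.of y ^ q) := by
    rcases Int.natAbs_eq p with h' | h'
    · rwa [← h']
    · rw [h', zpow_neg] at hc
      exact (Commute.inv_left_iff).mp hc
  have hy : Commute (FreeGroup.of x ^ (p.natAbs : ℤ)) (FreeGroup.of y ^ (q.natAbs : ℤ)) := by
    rcases Int.natAbs_eq q with h' | h'
    · rwa [← h']
    · rw [h', zpow_neg] at hx
      exact (Commute.inv_right_iff).mp hx
  rw [zpow_natCast, zpow_natCast] at hy
  exact ncomm_nat h (Int.natAbs_ne_zero.mpr hp) (Int.natAbs_ne_zero.mpr hq) hy.eq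

/-! ### Free groups over subsingletons are commutative -/

theorem freeGroup_comm_of_subsingleton {β : Type*} [Subsingleton β] (u v : FreeGroup β) :
    u * v = v * u := by
  rcases isEmpty_or_nonempty β with hE | ⟨⟨b₀⟩⟩
  · have key : ∀ w : FreeGroup β, w = 1 := by
      have h1 : MonoidHom.id (FreeGroup β) = (1 : FreeGroup β →* FreeGroup β) :=
        FreeGroup.ext_hom _ _ (fun a => hE.elim a)
      intro w
      have := DFunLike.congr_fun h1 w
      simpa using this
    rw [key u, key v]
  · set φ : FreeGroup β →* Multiplicative ℤ :=
      FreeGroup.lift (fun _ : β => Multiplicative.ofAdd (1 : ℤ)) with hφ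
    set ψ : Multiplicative ℤ →* FreeGroup β := zpowersHom _ (FreeGroup.of b₀) with hψ
    have hcomp : ψ.comp φ = MonoidHom.id (FreeGroup β) := by
      apply FreeGroup.ext_hom
      intro a
      have ha : a = b₀ := Subsingleton.elim _ _
      simp [hφ, hψ, ha, zpowersHom_apply]
    have key : ∀ w : FreeGroup β, ψ (φ w) = w := by
      intro w
      have := DFunLike.congr_fun hcomp w
      simpa using this
    calc u * v = ψ (φ u) * ψ (φ v) := by rw [key, key]
      _ = ψ (φ u * φ v) := (map_mul ψ _ _).symm
      _ = ψ (φ v * φ u) := by rw [mul_comm]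
      _ = v * u := by rw [map_mul, key, key]

/-! ### Subgroups of `Multiplicative ℤ` -/

theorem subgroup_mult_int_eq_zpowers (Z : Subgroup (Multiplicative ℤ)) :
    ∃ z : Multiplicative ℤ, Z = Subgroup.zpowers z := by
  obtain ⟨a, ha⟩ := Int.subgroup_cyclic (Subgroup.toAddSubgroup' Z)
  refine ⟨Multiplicative.ofAdd a, ?_⟩
  have hZ : Z = AddSubgroup.toSubgroup (AddSubgroup.closure {a}) := by
    rw [← ha]; simp
  rw [hZ]
  ext w
  rw [← AddSubgroup.zmultiples_eq_closure]
  constructor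
  · intro hw
    have hw' : Multiplicative.toAdd w ∈ AddSubgroup.zmultiples a := hw
    obtain ⟨k, hk⟩ := (AddSubgroup.mem_zmultiples_iff).mp hw'
    refine Subgroup.mem_zpowers_iff.mpr ⟨k, ?_⟩
    apply Multiplicative.toAdd.injective
    rw [toAdd_zpow]
    simpa using hk
  · intro hw
    obtain ⟨k, hk⟩ := Subgroup.mem_zpowers_iff.mp hw
    show Multiplicative.toAdd w ∈ AddSubgroup.zmultiples a
    refine (AddSubgroup.mem_zmultiples_iff).mpr ⟨k, ?_⟩
    rw [← hk, toAdd_zpow]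
    simp

noncomputable def zpowersMulEquivInt {z : Multiplicative ℤ} (hz : z ≠ 1) :
    ↥(Subgroup.zpowers z) ≃* Multiplicative ℤ := by
  have htz : Multiplicative.toAdd z ≠ 0 := by
    simpa using fun h => hz (Multiplicative.toAdd.injective (by simpa using h))
  have hinj : Function.Injective (zpowersHom (Multiplicative ℤ) z) := by
    intro a b hab
    rw [zpowersHom_apply, zpowersHom_apply] at hab
    have := congrArg Multiplicative.toAdd hab
    rw [toAdd_zpow, toAdd_zpow, smul_eq_mul, smul_eq_mul] at this
    exact Multiplicative.toAdd.injective (mul_right_cancel₀ htz this)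
  have hrange : (zpowersHom (Multiplicative ℤ) z).range = Subgroup.zpowers z := by
    ext w
    rw [MonoidHom.mem_range, Subgroup.mem_zpowers_iff]
    constructor
    · rintro ⟨n, hn⟩; exact ⟨Multiplicative.toAdd n, by rwa [zpowersHom_apply] at hn⟩
    · rintro ⟨k, hk⟩; exact ⟨Multiplicative.ofAdd k, by rwa [zpowersHom_apply]⟩
  exact ((MonoidHom.ofInjective hinj).trans (MulEquiv.subgroupCongr hrange)).symm

/-! ### Finding powers in finite-index subgroups -/

theorem exists_zpow_mem {Γ : Type*} [Group Γ] [Infinite Γ] (A : Subgroup Γ)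
    (hA : A.index ≠ 0) (g : Γ) : ∃ p : ℤ, p ≠ 0 ∧ g ^ p ∈ A := by
  haveI : A.FiniteIndex := ⟨hA⟩
  set S := A.comap (zpowersHom Γ g) with hS
  have hSi : S.index ≠ 0 := by
    rw [hS, Subgroup.index_comap]
    exact Subgroup.FiniteIndex.index_ne_zero (H := A.subgroupOf (zpowersHom Γ g).range)
  have hSb : S ≠ ⊥ := by
    intro h
    rw [h, Subgroup.index_bot] at hSi
    exact hSi Nat.card_eq_zero_of_infinite
  obtain ⟨⟨s, hsS⟩, hs1⟩ := Subgroup.ne_bot_iff_exists_ne_one.mp hSb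
  have hs1' : s ≠ 1 := by simpa [Subtype.ext_iff] using hs1
  refine ⟨Multiplicative.toAdd s, ?_, ?_⟩
  · simpa using fun h => hs1' (Multiplicative.toAdd.injective (by simpa using h))
  · have := hsS
    rwa [Subgroup.mem_comap, zpowersHom_apply] at this




open Subgroup

universe w

theorem main_lemma {ι : Type w} {x y : ι} (hxy : x ≠ y)
    (K : Subgroup (FreeGroup ι × Multiplicative ℤ)) (hK : K.index ≠ 0) :
    ∃ K' : Subgroup (FreeGroup ι × Multiplicative ℤ), K' ≤ K ∧ K'.relIndex K ≠ 0 ∧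
      ∃ (ι' : Type w) (x' y' : ι'), x' ≠ y' ∧
        Nonempty (↥K' ≃* FreeGroup ι' × Multiplicative ℤ) := by
  haveI : K.FiniteIndex := ⟨hK⟩
  haveI : Nonempty ι := ⟨x⟩
  set inl : FreeGroup ι →* FreeGroup ι × Multiplicative ℤ :=
    MonoidHom.inl (FreeGroup ι) (Multiplicative ℤ) with hinl
  set inr : Multiplicative ℤ →* FreeGroup ι × Multiplicative ℤ :=
    MonoidHom.inr (FreeGroup ι) (Multiplicative ℤ) with hinr
  set A₀ : Subgroup (FreeGroup ι) := K.comap inl with hA₀def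
  set Z₀ : Subgroup (Multiplicative ℤ) := K.comap inr with hZ₀def
  have hA₀ : A₀.index ≠ 0 := by
    rw [hA₀def, Subgroup.index_comap]
    exact Subgroup.FiniteIndex.index_ne_zero (H := K.subgroupOf inl.range)
  have hZ₀ : Z₀.index ≠ 0 := by
    rw [hZ₀def, Subgroup.index_comap]
    exact Subgroup.FiniteIndex.index_ne_zero (H := K.subgroupOf inr.range)
  haveI : A₀.FiniteIndex := ⟨hA₀⟩
  haveI : Z₀.FiniteIndex := ⟨hZ₀⟩
  obtain ⟨z, hzZ⟩ := subgroup_mult_int_eq_zpowers Z₀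
  have hz1 : z ≠ 1 := by
    rintro rfl
    rw [Subgroup.zpowers_one_eq_bot] at hzZ
    rw [hzZ, Subgroup.index_bot] at hZ₀
    exact hZ₀ Nat.card_eq_zero_of_infinite
  refine ⟨A₀.prod Z₀, ?_, ?_, ?_⟩
  · rintro ⟨a, w⟩ hmem
    obtain ⟨ha, hw⟩ := Subgroup.mem_prod.mp hmem
    have h1 : ((a, 1) : FreeGroup ι × Multiplicative ℤ) ∈ K := ha
    have h2 : ((1, w) : FreeGroup ι × Multiplicative ℤ) ∈ K := hw
    simpa using mul_mem h1 h2
  · -- finite relindex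
    set π : ↥K →* Multiplicative ℤ :=
      (MonoidHom.snd (FreeGroup ι) (Multiplicative ℤ)).comp K.subtype with hπ
    set W : Subgroup ↥K := (A₀.prod Z₀).subgroupOf K with hW
    have hker : π.ker ≤ W := by
      rintro ⟨⟨a, w⟩, hk⟩ hkk
      have hw1 : w = 1 := by simpa [hπ, MonoidHom.mem_ker] using hkk
      subst hw1
      have ha : a ∈ A₀ := by
        rw [hA₀def, Subgroup.mem_comap]; exact hk
      exact Subgroup.mem_prod.mpr ⟨ha, one_mem _⟩
    have hWeq : W = (W.map π).comap π := by
      rw [Subgroup.comap_map_eq, sup_eq_left.mpr hker]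
    have hZle : Z₀ ≤ W.map π := by
      intro w hw
      have hk : ((1, w) : FreeGroup ι × Multiplicative ℤ) ∈ K := hw
      refine ⟨⟨(1, w), hk⟩, ?_, rfl⟩
      exact Subgroup.mem_prod.mpr ⟨one_mem _, hw⟩
    have hZrel : Z₀.relIndex π.range ≠ 0 :=
      Subgroup.FiniteIndex.index_ne_zero (H := Z₀.subgroupOf π.range)
    have hdvd : (W.map π).relIndex π.range ∣ Z₀.relIndex π.range :=
      Subgroup.relIndex_dvd_of_le_left π.range hZle
    have hMrel : (W.map π).relIndex π.range ≠ 0 := by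
      intro h0
      rw [h0] at hdvd
      exact hZrel (eq_zero_of_zero_dvd hdvd)
    show W.index ≠ 0
    rw [hWeq, Subgroup.index_comap]
    exact hMrel
  · -- the isomorphism
    haveI : IsFreeGroup ↥A₀ := inferInstance
    have hgen : ∃ a b : IsFreeGroup.Generators ↥A₀, a ≠ b := by
      by_contra hcon
      push_neg at hcon
      haveI : Subsingleton (IsFreeGroup.Generators ↥A₀) := ⟨hcon⟩
      have hcomm : ∀ u v : ↥A₀, u * v = v * u := by
        intro u v
        apply (IsFreeGroup.toFreeGroup ↥A₀).injective
        rw [map_mul, map_mul]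
        exact freeGroup_comm_of_subsingleton _ _
      obtain ⟨p, hp0, hxp⟩ := exists_zpow_mem A₀ hA₀ (FreeGroup.of x)
      obtain ⟨q, hq0, hyq⟩ := exists_zpow_mem A₀ hA₀ (FreeGroup.of y)
      have := hcomm ⟨_, hxp⟩ ⟨_, hyq⟩
      rw [Subtype.ext_iff] at this
      exact ncomm_zpow hxy hp0 hq0 this
    obtain ⟨x', y', hxy'⟩ := hgen
    refine ⟨IsFreeGroup.Generators ↥A₀, x', y', hxy', ?_⟩
    have e₁ : ↥(A₀.prod Z₀) ≃* ↥A₀ × ↥Z₀ := Subgroup.prodEquiv A₀ Z₀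
    have e₂ : ↥A₀ ≃* FreeGroup (IsFreeGroup.Generators ↥A₀) := IsFreeGroup.toFreeGroup ↥A₀
    have e₃ : ↥Z₀ ≃* Multiplicative ℤ :=
      (MulEquiv.subgroupCongr hzZ).trans (zpowersMulEquivInt hz1)
    exact ⟨e₁.trans (MulEquiv.prodCongr e₂ e₃)⟩



theorem subgroupOf_map_self {Γ : Type u} [Group Γ] (K : Subgroup Γ) (X : Subgroup ↥K) :
    (X.map K.subtype).subgroupOf K = X := by
  rw [Subgroup.subgroupOf, Subgroup.comap_map_eq_self_of_injective K.subtype_injective]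

theorem map_subtype_relindex {Γ : Type u} [Group Γ] (K : Subgroup Γ) (X Y : Subgroup ↥K) :
    (X.map K.subtype).relIndex (Y.map K.subtype) = X.relIndex Y := by
  rw [← Subgroup.relIndex_subgroupOf (Subgroup.map_subtype_le Y),
    subgroupOf_map_self, subgroupOf_map_self]

theorem relindex_shift {Γ : Type u} [Group Γ] (G' B : Subgroup Γ) (C' : Subgroup ↥G') :
    C'.relIndex (B.subgroupOf G') = (C'.map G'.subtype).relIndex (B ⊓ G') := by
  conv_lhs => rw [← subgroupOf_map_self G' C', ← Subgroup.inf_subgroupOf_right B G']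
  rw [Subgroup.relIndex_subgroupOf inf_le_right]

theorem relindex_shift' {Γ : Type u} [Group Γ] (G' X : Subgroup Γ) (Y' : Subgroup ↥G') :
    (X.subgroupOf G').relIndex Y' = (X ⊓ G').relIndex (Y'.map G'.subtype) := by
  conv_lhs => rw [← subgroupOf_map_self G' Y', ← Subgroup.inf_subgroupOf_right X G']
  rw [Subgroup.relIndex_subgroupOf (Subgroup.map_subtype_le Y')]

theorem isVirtFNZ_map {Γ : Type u} [Group Γ] {G' : Subgroup Γ} {C' : Subgroup ↥G'}
    (h : IsVirtFNZ C') : IsVirtFNZ (C'.map G'.subtype) := by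
  obtain ⟨H, hle, hrel, ι, x, y, hxy, ⟨e⟩⟩ := h
  refine ⟨H.map G'.subtype, Subgroup.map_mono hle, ?_, ι, x, y, hxy, ?_⟩
  · rwa [map_subtype_relindex]
  · exact ⟨(Subgroup.equivMapOfInjective H G'.subtype G'.subtype_injective).symm.trans e⟩

theorem isVirtFNZ_subgroupOf {Γ : Type u} [Group Γ] {G' B : Subgroup Γ} [G'.FiniteIndex]
    (h : IsVirtFNZ B) : IsVirtFNZ (B.subgroupOf G') := by
  obtain ⟨H, hHB, hHrel, ι, x, y, hxy, ⟨e⟩⟩ := h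
  have hGH : (G'.subgroupOf H).index ≠ 0 := Subgroup.FiniteIndex.index_ne_zero
  have hK₁ : ((G'.subgroupOf H).comap e.symm.toMonoidHom).index ≠ 0 := by
    rw [Subgroup.index_comap, MonoidHom.range_eq_top.mpr e.symm.surjective,
      Subgroup.relIndex_top_right]
    exact hGH
  obtain ⟨K', hK'le, hK'rel, ι', x', y', hxy', ⟨e'⟩⟩ := main_lemma hxy _ hK₁
  have hmapK₁ : (G'.subgroupOf H).map e.toMonoidHom
      = (G'.subgroupOf H).comap e.symm.toMonoidHom :=
    Subgroup.map_equiv_eq_comap_symm' e _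
  have hK₂le : K'.comap e.toMonoidHom
      ≤ G'.subgroupOf H := by
    intro g hg
    have h1 := hK'le hg
    rw [← hmapK₁, Subgroup.mem_map] at h1
    obtain ⟨g', hg', hgg⟩ := h1
    rwa [← e.injective hgg]
  set K₂ := K'.comap e.toMonoidHom with hK₂def
  have hK₂rel : K₂.relIndex (G'.subgroupOf H) ≠ 0 := by
    rw [hK₂def, Subgroup.relIndex_comap]
    rw [show (G'.subgroupOf H).map e.toMonoidHom
      = (G'.subgroupOf H).comap e.symm.toMonoidHom from hmapK₁]
    exact hK'rel
  have e₂ : ↥K₂ ≃* ↥K' := by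
    have hm : K₂.map e.toMonoidHom = K' := by
      rw [hK₂def]
      exact Subgroup.map_comap_eq_self_of_surjective e.surjective K'
    exact (e.subgroupMap K₂).trans (MulEquiv.subgroupCongr hm)
  set K₃ := K₂.map H.subtype with hK₃def
  have hK₃B : K₃ ≤ B := le_trans (Subgroup.map_subtype_le K₂) hHB
  have hK₃G' : K₃ ≤ G' := by
    calc K₃ ≤ (G'.subgroupOf H).map H.subtype := Subgroup.map_mono hK₂le
      _ = G' ⊓ H := Subgroup.subgroupOf_map_subtype G' H
      _ ≤ G' := inf_le_left
  have hstep1 : K₃.relIndex (G' ⊓ H) ≠ 0 := by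
    rw [← Subgroup.subgroupOf_map_subtype G' H, hK₃def, map_subtype_relindex]
    exact hK₂rel
  have hG'B : G'.relIndex B ≠ 0 := Subgroup.FiniteIndex.index_ne_zero
  have hstep2 : (G' ⊓ H).relIndex B ≠ 0 := Subgroup.relIndex_inf_ne_zero hG'B hHrel
  have hstep3 : (G' ⊓ H).relIndex (B ⊓ G') ≠ 0 :=
    fun h0 => hstep2 (Subgroup.relIndex_eq_zero_of_le_right inf_le_left h0)
  have hstep4 : K₃.relIndex (B ⊓ G') ≠ 0 := Subgroup.relIndex_ne_zero_trans hstep1 hstep3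
  refine ⟨K₃.subgroupOf G', Subgroup.comap_mono hK₃B, ?_, ι', x', y', hxy', ?_⟩
  · rw [relindex_shift, Subgroup.subgroupOf_map_subtype, inf_of_le_left hK₃G']
    exact hstep4
  · exact ⟨(((Subgroup.subgroupOfEquivOfLe hK₃G').trans
      (Subgroup.equivMapOfInjective K₂ H.subtype H.subtype_injective).symm).trans e₂).trans e'⟩

end BlockAux

/-- If `G' ≤ G` has finite index and `B` is a block in `G`, then
`B ∩ G'` is a block in `G'` and has finite index in `B`; moreover `B` is a block
in `G` if and only if `B ∩ G'` is a block in `G'`. -/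
theorem isGroupBlock_subgroupOf_iff {G : Type u} [Group G]
    (G' B : Subgroup G) (hfin : G'.FiniteIndex) :
    (IsGroupBlock B → IsGroupBlock (B.subgroupOf G') ∧ G'.relIndex B ≠ 0) ∧
    (IsGroupBlock B ↔ IsGroupBlock (B.subgroupOf G')) := by
  haveI := hfin
  have hG'B : G'.relIndex B ≠ 0 := Subgroup.FiniteIndex.index_ne_zero
  have hBG'B : (B ⊓ G').relIndex B ≠ 0 := by
    rw [inf_comm, Subgroup.inf_relIndex_right]; exact hG'B
  have fwd : IsGroupBlock B → IsGroupBlock (B.subgroupOf G') := by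
    rintro ⟨hBv, hBmax⟩
    refine ⟨BlockAux.isVirtFNZ_subgroupOf hBv, ?_⟩
    intro C' hC'v hC'rel
    have hCv : IsVirtFNZ (C'.map G'.subtype) := BlockAux.isVirtFNZ_map hC'v
    have h1 : (C'.map G'.subtype).relIndex (B ⊓ G') ≠ 0 := by
      rwa [BlockAux.relindex_shift] at hC'rel
    have hCB : (C'.map G'.subtype).relIndex B ≠ 0 :=
      Subgroup.relIndex_ne_zero_trans h1 hBG'B
    have hBC : B.relIndex (C'.map G'.subtype) ≠ 0 := hBmax _ hCv hCB
    have hG'C : G'.relIndex (C'.map G'.subtype) ≠ 0 := Subgroup.FiniteIndex.index_ne_zero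
    have h3 : (B ⊓ G').relIndex (C'.map G'.subtype) ≠ 0 :=
      Subgroup.relIndex_inf_ne_zero hBC hG'C
    rw [BlockAux.relindex_shift']
    exact h3
  have bwd : IsGroupBlock (B.subgroupOf G') → IsGroupBlock B := by
    rintro ⟨hBv', hBmax'⟩
    have hBGv : IsVirtFNZ (B ⊓ G') := by
      have := BlockAux.isVirtFNZ_map hBv'
      rwa [Subgroup.subgroupOf_map_subtype] at this
    have hBv : IsVirtFNZ B := by
      obtain ⟨H, hle, hrel, ι, xx, yy, hxy, he⟩ := hBGv
      exact ⟨H, hle.trans inf_le_left, Subgroup.relIndex_ne_zero_trans hrel hBG'B,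
        ι, xx, yy, hxy, he⟩
    refine ⟨hBv, ?_⟩
    intro C hCv hCB
    have hC'v : IsVirtFNZ (C.subgroupOf G') := BlockAux.isVirtFNZ_subgroupOf hCv
    have hG'C : G'.relIndex C ≠ 0 := Subgroup.FiniteIndex.index_ne_zero
    have h4 : (C ⊓ G').relIndex B ≠ 0 := Subgroup.relIndex_inf_ne_zero hCB hG'B
    have h5 : (C ⊓ G').relIndex (B ⊓ G') ≠ 0 :=
      fun h0 => h4 (Subgroup.relIndex_eq_zero_of_le_right inf_le_left h0)
    have h6 : (C.subgroupOf G').relIndex (B.subgroupOf G') ≠ 0 := by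
      rw [BlockAux.relindex_shift, Subgroup.subgroupOf_map_subtype]
      exact h5
    have h7 := hBmax' _ hC'v h6
    rw [BlockAux.relindex_shift', Subgroup.subgroupOf_map_subtype] at h7
    have h8 : (C ⊓ G').relIndex C ≠ 0 := by
      rw [Subgroup.inf_relIndex_left]; exact hG'C
    have h9 : (B ⊓ G').relIndex C ≠ 0 := Subgroup.relIndex_ne_zero_trans h7 h8
    exact fun h0 => h9 (Subgroup.relIndex_eq_zero_of_le_left inf_le_left h0)
  exact ⟨fun hB => ⟨fwd hB, hG'B⟩, ⟨fwd, bwd⟩⟩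
end

section
/- Suppose a group G acts on a tree T with the following properties: (i) there are two colors of vertices, black and white, every edge joins a black vertex to a white vertex, and every black vertex has valence 2; (ii) the blocks of G are precisely the stabilizers of white vertices; (iii) for any white vertex ṽ and distinct black vertices b̃, b̃' adjacent to ṽ, the intersection Stab(b̃) ∩ Stab(b̃') is cyclic; (iv) distinct blocks stabilize distinct white vertices. Then for any three blocks B₁, B₂, B₃ of G with [Bᵢ : Bᵢ ∩ Bⱼ] = ∞ for i ≠ j, the intersection B₁ ∩ B₂ ∩ B₃ is virtually cyclic. -/
universe u v

/-! ### Auxiliary lemmas -/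

/-- If mapping a list by `f` returns the same list, then `f` fixes every element. -/
lemma list_map_eq_self_fix {α : Type*} {f : α → α} :
    ∀ {l : List α}, List.map f l = l → ∀ x ∈ l, f x = x := by
  intro l
  induction l with
  | nil => simp
  | cons a l ih =>
    intro h x hx
    rw [List.map_cons, List.cons.injEq] at h
    rcases List.mem_cons.1 hx with hx | hx
    · exact hx ▸ h.1
    · exact ih h.2 x hx

/-- In a tree, an automorphism-like action element fixing the endpoints of a path
fixes the whole path pointwise. -/
lemma fixed_of_path {G : Type u} {V : Type v} [Group G] [MulAction G V]
    (T : SimpleGraph V) (hT : T.IsTree)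
    (hact : ∀ (g : G) (x y : V), T.Adj x y → T.Adj (g • x) (g • y))
    {u w : V} (p : T.Walk u w) (hp : p.IsPath) (g : G)
    (hu : g • u = u) (hw : g • w = w) : ∀ x ∈ p.support, g • x = x := by
  let φ : T →g T := ⟨fun x => g • x, fun h => hact g _ _ h⟩
  have hinj : Function.Injective φ := MulAction.injective g
  have hmap : (p.map φ).IsPath := SimpleGraph.Walk.map_isPath_of_injective hinj hp
  have hcopy : ((p.map φ).copy hu hw).IsPath := (SimpleGraph.Walk.isPath_copy _ hu hw).2 hmap
  have hpq : (p.map φ).copy hu hw = p := (hT.existsUnique_path u w).unique hcopy hp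
  have hsup : List.map (fun x => g • x) p.support = p.support := by
    have := congrArg SimpleGraph.Walk.support hpq
    rwa [SimpleGraph.Walk.support_copy, SimpleGraph.Walk.support_map] at this
  exact list_map_eq_self_fix hsup

/-- Divergence lemma: two paths in a graph starting at `a` and ending at distinct
vertices `b ≠ c` (both different from `a`) produce a vertex `m` with two distinct
neighbours on the union of the two paths; moreover either `m ∈ {a, b, c}` or `m`
has a third distinct neighbour on the paths. -/
lemma diverge {V : Type v} {T : SimpleGraph V} :
    ∀ {a b : V} (p : T.Walk a b), p.IsPath → ∀ {c : V} (q : T.Walk a c), q.IsPath →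
    a ≠ b → a ≠ c → b ≠ c →
    ∃ m d d', d ≠ d' ∧ T.Adj m d ∧ T.Adj m d' ∧
      m ∈ p.support ++ q.support ∧ d ∈ p.support ++ q.support ∧
      d' ∈ p.support ++ q.support ∧
      (m = a ∨ m = b ∨ m = c ∨
        ∃ e, e ∈ p.support ++ q.support ∧ T.Adj m e ∧ e ≠ d ∧ e ≠ d') := by
  intro a b p
  induction p with
  | nil => intro _ c q _ hab _ _; exact absurd rfl hab
  | @cons a x b h p' ih =>
    intro hp c q hq hab hac hbc
    cases q with
    | nil => exact absurd rfl hac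
    | @cons _ y _ h' q' =>
      rw [SimpleGraph.Walk.cons_isPath_iff] at hp hq
      by_cases hxy : x = y
      · subst hxy
        by_cases hxb : x = b
        · -- m = b: the paths share the first edge and p stops at x = b.
          subst hxb
          have hxc : x ≠ c := hbc
          cases q' with
          | nil => exact absurd rfl hxc
          | @cons _ z _ h'' q'' =>
            refine ⟨x, a, z, ?_, h.symm, h'', ?_, ?_, ?_, Or.inr (Or.inl rfl)⟩
            · -- a ≠ z since q is a path
              intro haz
              exact hq.2 (by rw [haz]; simp)
            · simp
            · simp
            · simp
        · by_cases hxc : x = c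
          · -- m = c: the paths share the first edge and q stops at x = c.
            subst hxc
            cases p' with
            | nil => exact absurd rfl hxb
            | @cons _ z _ h'' p'' =>
              refine ⟨x, a, z, ?_, h.symm, h'', ?_, ?_, ?_, Or.inr (Or.inr (Or.inl rfl))⟩
              · intro haz
                exact hp.2 (by rw [haz]; simp)
              · simp
              · simp
              · simp
          · -- recurse on the shared first edge
            obtain ⟨m, d, d', hdd', hmd, hmd', hm, hd, hd', hrest⟩ :=
              ih hp.1 q' hq.1 hxb hxc hbc
            have hsub : ∀ z : V, z ∈ p'.support ++ q'.support →
                z ∈ (SimpleGraph.Walk.cons h p').support ++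
                    (SimpleGraph.Walk.cons h' q').support := by
              intro z hz
              simp only [List.mem_append] at hz ⊢
              rcases hz with hz | hz
              · exact Or.inl (by simp [hz])
              · exact Or.inr (by simp [hz])
            have hanotin : ∀ z : V, z ∈ p'.support ++ q'.support → a ≠ z := by
              intro z hz haz
              subst haz
              rcases List.mem_append.1 hz with hz | hz
              · exact hp.2 hz
              · exact hq.2 hz
            refine ⟨m, d, d', hdd', hmd, hmd', hsub m hm, hsub d hd, hsub d' hd', ?_⟩
            rcases hrest with hma | hmb | hmc | ⟨e, he, hme, hed, hed'⟩
            · -- m = x : use a as a third neighbour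
              subst hma
              refine Or.inr (Or.inr (Or.inr ⟨a, by simp, h.symm, ?_, ?_⟩))
              · exact hanotin d hd
              · exact hanotin d' hd'
            · exact Or.inr (Or.inl hmb)
            · exact Or.inr (Or.inr (Or.inl hmc))
            · exact Or.inr (Or.inr (Or.inr ⟨e, hsub e he, hme, hed, hed'⟩))
      · -- paths diverge immediately at a
        exact ⟨a, x, y, hxy, h, h', by simp, by simp, by simp, Or.inl rfl⟩

/-- Suppose `G` acts on a bipartite tree `T` (black/white vertices)
where every black vertex has valence 2, blocks are exactly the stabilizers of
white vertices, stabilizers of distinct black vertices adjacent to a common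
white vertex intersect cyclically, and distinct blocks stabilize distinct white
vertices.  Then any three blocks with pairwise infinite-index intersections have
virtually cyclic triple intersection. -/
theorem bipartite_tree_unbranched {G : Type u} {V : Type v} [Group G]
    (T : SimpleGraph V) (hT : T.IsTree) [MulAction G V]
    (white : V → Prop)
    (hact : ∀ (g : G) (x y : V), T.Adj x y → T.Adj (g • x) (g • y))
    (hcol : ∀ (g : G) (x : V), white (g • x) ↔ white x)
    (hbip : ∀ x y : V, T.Adj x y → (white x ↔ ¬ white y))
    (hval : ∀ x : V, ¬ white x → (T.neighborSet x).ncard = 2)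
    (hblocks : ∀ B : Subgroup G, IsGroupBlock B ↔
      ∃ x : V, white x ∧ B = MulAction.stabilizer G x)
    (hcyc : ∀ x y y' : V, white x → ¬ white y → ¬ white y' → y ≠ y' →
      T.Adj x y → T.Adj x y' →
      IsCyclic ↥(MulAction.stabilizer G y ⊓ MulAction.stabilizer G y'))
    (hdistinct : ∀ x y : V, white x → white y →
      MulAction.stabilizer G x = MulAction.stabilizer G y → x = y) :
    ∀ B₁ B₂ B₃ : Subgroup G, IsGroupBlock B₁ → IsGroupBlock B₂ → IsGroupBlock B₃ →
      B₂.relIndex B₁ = 0 → B₃.relIndex B₁ = 0 → B₁.relIndex B₂ = 0 →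
      B₃.relIndex B₂ = 0 → B₁.relIndex B₃ = 0 → B₂.relIndex B₃ = 0 →
      IsVirtuallyCyclic ↥(B₁ ⊓ B₂ ⊓ B₃) := by
  intro B₁ B₂ B₃ hB₁ hB₂ hB₃ h21 h31 h12 h32 h13 h23
  obtain ⟨v₁, hw₁, rfl⟩ := (hblocks B₁).1 hB₁
  obtain ⟨v₂, hw₂, rfl⟩ := (hblocks B₂).1 hB₂
  obtain ⟨v₃, hw₃, rfl⟩ := (hblocks B₃).1 hB₃
  set S₁ := MulAction.stabilizer G v₁ with hS₁
  set S₂ := MulAction.stabilizer G v₂ with hS₂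
  set S₃ := MulAction.stabilizer G v₃ with hS₃
  have hne : ∀ {i j : V}, MulAction.stabilizer G j = MulAction.stabilizer G i →
      (MulAction.stabilizer G j).relIndex (MulAction.stabilizer G i) = 0 → False := by
    intro i j hij h
    rw [hij, Subgroup.relIndex_self] at h
    exact one_ne_zero h
  have h12' : v₁ ≠ v₂ := fun hv => hne (by rw [hv]) h21
  have h13' : v₁ ≠ v₃ := fun hv => hne (by rw [hv]) h31
  have h23' : v₂ ≠ v₃ := fun hv => hne (by rw [hv]) h32
  obtain ⟨p, hp, -⟩ := hT.existsUnique_path v₁ v₂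
  obtain ⟨q, hq, -⟩ := hT.existsUnique_path v₁ v₃
  -- every element of the triple intersection fixes both paths pointwise
  have hfix : ∀ x, x ∈ p.support ++ q.support →
      ∀ k ∈ S₁ ⊓ S₂ ⊓ S₃, k • x = x := by
    intro x hx k hk
    have hk1 : k • v₁ = v₁ := hk.1.1
    have hk2 : k • v₂ = v₂ := hk.1.2
    have hk3 : k • v₃ = v₃ := hk.2
    rcases List.mem_append.1 hx with hx | hx
    · exact fixed_of_path T hT hact p hp k hk1 hk2 x hx
    · exact fixed_of_path T hT hact q hq k hk1 hk3 x hx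
  obtain ⟨m, d, d', hdd', hmd, hmd', hm, hd, hd', hrest⟩ :=
    diverge p hp q hq h12' h13' h23'
  -- the branch vertex must be white
  have hwm : white m := by
    by_contra hmb
    have hme : ∃ e, e ∈ p.support ++ q.support ∧ T.Adj m e ∧ e ≠ d ∧ e ≠ d' := by
      rcases hrest with h | h | h | h
      · exact absurd (h ▸ hw₁) hmb
      · exact absurd (h ▸ hw₂) hmb
      · exact absurd (h ▸ hw₃) hmb
      · exact h
    obtain ⟨e, -, hmadj, hed, hed'⟩ := hme
    have hsub : ({d, d', e} : Set V) ⊆ T.neighborSet m := by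
      intro z hz
      rcases hz with hz | hz | hz
      · exact hz ▸ hmd
      · exact hz ▸ hmd'
      · simp only [Set.mem_singleton_iff] at hz
        exact hz ▸ hmadj
    have hfin : (T.neighborSet m).Finite := by
      by_contra hinf
      have h0 : (T.neighborSet m).ncard = 0 := Set.Infinite.ncard hinf
      rw [hval m hmb] at h0
      exact two_ne_zero h0
    have h3 : ({d, d', e} : Set V).ncard = 3 :=
      Set.ncard_eq_three.2 ⟨d, d', e, hdd', Ne.symm hed, Ne.symm hed', rfl⟩
    have hle : ({d, d', e} : Set V).ncard ≤ 2 := by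
      rw [← hval m hmb]
      exact Set.ncard_le_ncard hsub hfin
    omega
  -- d and d' are black
  have hbd : ¬ white d := (hbip m d hmd).1 hwm
  have hbd' : ¬ white d' := (hbip m d' hmd').1 hwm
  have hcy : IsCyclic ↥(MulAction.stabilizer G d ⊓ MulAction.stabilizer G d') :=
    hcyc m d d' hwm hbd hbd' hdd' hmd hmd'
  have hle : S₁ ⊓ S₂ ⊓ S₃ ≤ MulAction.stabilizer G d ⊓ MulAction.stabilizer G d' := by
    intro k hk
    exact ⟨hfix d hd k hk, hfix d' hd' k hk⟩
  have hKcy : IsCyclic ↥(S₁ ⊓ S₂ ⊓ S₃) := Subgroup.isCyclic_of_le hle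
  refine ⟨⊤, ⟨?_⟩, ?_⟩
  · rw [Subgroup.index_top]; exact one_ne_zero
  · exact isCyclic_of_surjective (Subgroup.topEquiv (G := ↥(S₁ ⊓ S₂ ⊓ S₃))).symm
      (Subgroup.topEquiv).symm.surjective
end
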